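/- Let E and F be real Banach spaces and let c : ℝ → L(E,F) be a curve into the space of bounded linear operators from E to F with the operator norm. Then c is C^∞ if and only if for every x ∈ E the curve t ↦ c(t)(x) is a C^∞ curve in F. (Banach-space instance of the lemma that a curve into L(E,F) is smooth iff it is smooth pointwise.) -/

import Mathlib

open Set Filter Asymptotics Topology

set_option linter.unusedSectionVars false

section Aux
variable {E F : Type*} [NormedAddCommGroup E] [NormedSpace ℝ E] [CompleteSpace E]
    [NormedAddCommGroup F] [NormedSpace ℝ F] [CompleteSpace F]

private lemma one_le_infty' : (1 : WithTop ℕ∞) ≤ ((⊤ : ℕ∞) : WithTop ℕ∞) := by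
  exact_mod_cast le_top

/-- Banach–Steinhaus: pointwise smooth curve of operators is Lipschitz in operator norm
on compact intervals. -/
private lemma aux_lip (c : ℝ → (E →L[ℝ] F)) (hc : ∀ x, ContDiff ℝ (⊤ : ℕ∞) (fun t => c t x))
    (a b : ℝ) : ∃ L : ℝ, 0 ≤ L ∧
      ∀ s ∈ Icc a b, ∀ t ∈ Icc a b, ‖c s - c t‖ ≤ L * |s - t| := by
  set ι := {p : ℝ × ℝ // p.1 ∈ Icc a b ∧ p.2 ∈ Icc a b ∧ p.1 ≠ p.2}
  set g : ι → E →L[ℝ] F := fun p => (p.1.1 - p.1.2)⁻¹ • (c p.1.1 - c p.1.2) with hg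
  have hbound : ∀ x : E, ∃ C, ∀ i : ι, ‖g i x‖ ≤ C := by
    intro x
    have hf : ContDiff ℝ (⊤ : ℕ∞) (fun t => c t x) := hc x
    have hderiv := (contDiff_infty_iff_deriv.mp hf).2
    obtain ⟨C, hC⟩ := isCompact_Icc.exists_bound_of_continuousOn
      (hderiv.continuous.continuousOn (s := Icc a b))
    refine ⟨C, fun i => ?_⟩
    obtain ⟨⟨s, t⟩, hs, ht, hst⟩ := i
    have hmv : ‖c s x - c t x‖ ≤ C * ‖s - t‖ := by
      refine Convex.norm_image_sub_le_of_norm_hasDerivWithin_le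
        (f := fun u => c u x) (f' := deriv fun u => c u x)
        (fun u _ => (((hf.differentiable (by simp)) u).hasDerivAt).hasDerivWithinAt)
        hC (convex_Icc a b) ht hs
    simp only [hg, ContinuousLinearMap.smul_apply, ContinuousLinearMap.sub_apply, norm_smul,
      norm_inv, Real.norm_eq_abs]
    have hst0 : |s - t| ≠ 0 := abs_ne_zero.mpr (sub_ne_zero.mpr hst)
    calc |s - t|⁻¹ * ‖c s x - c t x‖ ≤ |s - t|⁻¹ * (C * ‖s - t‖) := by gcongr
      _ = C := by
          rw [Real.norm_eq_abs]
          field_simp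
  obtain ⟨C', hC'⟩ := banach_steinhaus hbound
  refine ⟨max C' 0, le_max_right _ _, fun s hs t ht => ?_⟩
  rcases eq_or_ne s t with rfl | hst
  · simp
  · have heq : c s - c t = (s - t) • g ⟨(s, t), hs, ht, hst⟩ := by
      simp only [hg, smul_smul]
      rw [mul_inv_cancel₀ (sub_ne_zero.mpr hst), one_smul]
    have h0 : 0 ≤ |s - t| := abs_nonneg _
    have hC'' := (hC' ⟨(s, t), hs, ht, hst⟩).trans (le_max_left C' 0)
    calc ‖c s - c t‖ = ‖s - t‖ * ‖g ⟨(s, t), hs, ht, hst⟩‖ := by rw [heq]; exact norm_smul (s - t) (g ⟨(s, t), hs, ht, hst⟩)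
      _ ≤ |s - t| * (C' ⊔ 0) := by rw [Real.norm_eq_abs]; gcongr
      _ = (C' ⊔ 0) * |s - t| := mul_comm _ _

/-- Existence of a pointwise derivative operator which is the derivative in operator norm. -/
private lemma aux_deriv (c : ℝ → (E →L[ℝ] F)) (hc : ∀ x, ContDiff ℝ (⊤ : ℕ∞) (fun t => c t x)) :
    ∃ d : ℝ → (E →L[ℝ] F), (∀ t x, d t x = deriv (fun s => c s x) t) ∧
      (∀ t, HasDerivAt c (d t) t) := by
  have hdiff : ∀ x t, DifferentiableAt ℝ (fun s => c s x) t :=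
    fun x t => ((hc x).differentiable (by simp)) t
  choose L hL0 hL using fun t : ℝ => aux_lip c hc (t - 1) (t + 1)
  have hmem : ∀ t : ℝ, t ∈ Icc (t - 1) (t + 1) := fun t => by
    constructor <;> linarith
  -- boundedness of the pointwise derivative
  have hDbound : ∀ t x, ‖deriv (fun s => c s x) t‖ ≤ L t * ‖x‖ := by
    intro t x
    have htend := hasDerivAt_iff_tendsto_slope.mp (hdiff x t).hasDerivAt
    have hev : ∀ᶠ s in 𝓝[≠] t, ‖slope (fun s => c s x) t s‖ ≤ L t * ‖x‖ := by
      have hIcc : Icc (t - 1) (t + 1) ∈ 𝓝 t :=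
        Icc_mem_nhds (by linarith) (by linarith)
      filter_upwards [eventually_nhdsWithin_of_eventually_nhds hIcc,
        self_mem_nhdsWithin] with s hs hst
      rw [slope_def_module, norm_smul, norm_inv, Real.norm_eq_abs]
      have h1 : ‖c s x - c t x‖ ≤ (L t * |s - t|) * ‖x‖ := by
        calc ‖c s x - c t x‖ = ‖(c s - c t) x‖ := by simp
          _ ≤ ‖c s - c t‖ * ‖x‖ := (c s - c t).le_opNorm x
          _ ≤ (L t * |s - t|) * ‖x‖ :=
            mul_le_mul_of_nonneg_right (hL t s hs t (hmem t)) (norm_nonneg x)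
      have hst' : |s - t| ≠ 0 := abs_ne_zero.mpr (sub_ne_zero.mpr hst)
      calc |s - t|⁻¹ * ‖c s x - c t x‖ ≤ |s - t|⁻¹ * ((L t * |s - t|) * ‖x‖) := by gcongr
        _ = L t * ‖x‖ := by field_simp
    exact le_of_tendsto htend.norm hev
  have hex : ∃ d : ℝ → (E →L[ℝ] F), ∀ t x, d t x = deriv (fun s => c s x) t := by
    refine ⟨fun t => LinearMap.mkContinuous
      { toFun := fun x => deriv (fun s => c s x) t
        map_add' := fun x y => by
          show deriv (fun s => c s (x + y)) t = deriv (fun s => c s x) t + deriv (fun s => c s y) t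
          rw [show (fun s => c s (x + y)) = fun s => c s x + c s y from funext fun s => by simp,
            deriv_fun_add (hdiff x t) (hdiff y t)]
        map_smul' := fun m x => by
          show deriv (fun s => c s (m • x)) t = m • deriv (fun s => c s x) t
          rw [show (fun s => c s (m • x)) = fun s => m • c s x from funext fun s => by simp,
            deriv_fun_const_smul m (hdiff x t)] } (L t) (hDbound t), fun t x => rfl⟩
  obtain ⟨d, hdapp⟩ := hex
  refine ⟨d, hdapp, fun t => ?_⟩
  -- d is pointwise smooth
  have hcd : ∀ x, ContDiff ℝ (⊤ : ℕ∞) (fun t => d t x) := by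
    intro x
    have : (fun t => d t x) = deriv (fun s => c s x) := funext fun t => hdapp t x
    rw [this]
    exact (contDiff_infty_iff_deriv.mp (hc x)).2
  -- Lipschitz constant for d near t
  obtain ⟨M, hM0, hM⟩ := aux_lip d hcd (t - 1) (t + 1)
  -- key quadratic estimate
  have key : ∀ s ∈ Icc (t - 1) (t + 1), ‖c s - c t - (s - t) • d t‖ ≤ M * |s - t| * |s - t| := by
    intro s hs
    refine ContinuousLinearMap.opNorm_le_bound _ (by positivity) fun x => ?_
    -- mean value on uIcc t s
    have hsub : uIcc t s ⊆ Icc (t - 1) (t + 1) :=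
      (convex_Icc _ _).ordConnected.uIcc_subset (hmem t) hs
    have hg : ∀ u ∈ uIcc t s, HasDerivWithinAt
        (fun u => c u x - c t x - (u - t) • (d t x)) (d u x - d t x) (uIcc t s) u := by
      intro u _
      have h1 : HasDerivAt (fun u => c u x) (d u x) u := by
        rw [hdapp u x]; exact (hdiff x u).hasDerivAt
      have h2 : HasDerivAt (fun u : ℝ => c t x + (u - t) • (d t x)) (d t x) u := by
        have := ((hasDerivAt_id u).sub_const t).smul_const (d t x)
        simpa using this.const_add (c t x)
      have := h1.fun_sub h2
      simpa [sub_add_eq_sub_sub] using this.hasDerivWithinAt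
    have hbd : ∀ u ∈ uIcc t s, ‖d u x - d t x‖ ≤ (M * |s - t|) * ‖x‖ := by
      intro u hu
      calc ‖d u x - d t x‖ = ‖(d u - d t) x‖ := by simp
        _ ≤ ‖d u - d t‖ * ‖x‖ := (d u - d t).le_opNorm x
        _ ≤ (M * |u - t|) * ‖x‖ :=
            mul_le_mul_of_nonneg_right (hM u (hsub hu) t (hmem t)) (norm_nonneg x)
        _ ≤ (M * |s - t|) * ‖x‖ :=
            mul_le_mul_of_nonneg_right
              (mul_le_mul_of_nonneg_left (abs_sub_left_of_mem_uIcc hu) hM0) (norm_nonneg x)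
    have hmv := Convex.norm_image_sub_le_of_norm_hasDerivWithin_le hg hbd
      (convex_uIcc t s) (left_mem_uIcc) (right_mem_uIcc)
    simp only [sub_self, zero_smul, sub_zero] at hmv
    calc ‖(c s - c t - (s - t) • d t) x‖
        = ‖c s x - c t x - (s - t) • (d t x)‖ := by simp
      _ ≤ (M * |s - t|) * ‖x‖ * ‖s - t‖ := hmv
      _ = M * |s - t| * |s - t| * ‖x‖ := by rw [Real.norm_eq_abs]; ring
  -- conclude HasDerivAt from the quadratic bound
  rw [hasDerivAt_iff_isLittleO]
  have h1 : (fun s => c s - c t - (s - t) • d t) =O[𝓝 t] fun s => (s - t) * (s - t) := by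
    refine IsBigO.of_bound M ?_
    filter_upwards [Icc_mem_nhds (show t - 1 < t by linarith) (show t < t + 1 by linarith)]
      with s hs
    calc ‖c s - c t - (s - t) • d t‖ ≤ M * |s - t| * |s - t| := key s hs
      _ = M * ‖(s - t) * (s - t)‖ := by rw [Real.norm_eq_abs, abs_mul]; ring
  have h2 : (fun s : ℝ => (s - t) * (s - t)) =o[𝓝 t] fun s => s - t := by
    have ha : (fun s : ℝ => s - t) =o[𝓝 t] (fun _ => (1 : ℝ)) := by
      rw [isLittleO_one_iff]
      have : Tendsto (fun s : ℝ => s - t) (𝓝 t) (𝓝 (t - t)) :=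
        (continuous_id.sub continuous_const).tendsto t
      simpa using this
    have := ha.mul_isBigO (isBigO_refl (fun s : ℝ => s - t) (𝓝 t))
    simpa using this
  exact h1.trans_isLittleO h2

end Aux

/-- A curve into the space of bounded linear operators between Banach spaces is smooth
iff it is smooth pointwise. -/
theorem contDiff_clm_iff_pointwise {E F : Type*}
    [NormedAddCommGroup E] [NormedSpace ℝ E] [CompleteSpace E]
    [NormedAddCommGroup F] [NormedSpace ℝ F] [CompleteSpace F]
    (c : ℝ → (E →L[ℝ] F)) :
    ContDiff ℝ (⊤ : ℕ∞) c ↔ ∀ x : E, ContDiff ℝ (⊤ : ℕ∞) (fun t => c t x) := by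
  constructor
  · intro hc x
    exact hc.clm_apply contDiff_const
  · intro hc
    suffices H : ∀ (n : ℕ) (c : ℝ → (E →L[ℝ] F)),
        (∀ x, ContDiff ℝ (⊤ : ℕ∞) (fun t => c t x)) → ContDiff ℝ n c by
      exact contDiff_infty.mpr fun n => H n c hc
    intro n
    induction n with
    | zero =>
      intro c hc
      obtain ⟨d, _, hd⟩ := aux_deriv c hc
      rw [show ((0 : ℕ) : WithTop ℕ∞) = 0 by norm_cast, contDiff_zero]
      exact continuous_iff_continuousAt.mpr fun t => ((hd t).differentiableAt).continuousAt
    | succ n ih =>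
      intro c hc
      obtain ⟨d, hdx, hd⟩ := aux_deriv c hc
      have hdiff : Differentiable ℝ c := fun t => (hd t).differentiableAt
      have hderiv : deriv c = d := funext fun t => (hd t).deriv
      have hcd : ∀ x, ContDiff ℝ (⊤ : ℕ∞) (fun t => d t x) := by
        intro x
        have : (fun t => d t x) = deriv (fun s => c s x) := funext fun t => hdx t x
        rw [this]
        exact (contDiff_infty_iff_deriv.mp (hc x)).2
      have : ContDiff ℝ n d := ih d hcd
      rw [show ((n + 1 : ℕ) : WithTop ℕ∞) = (n : WithTop ℕ∞) + 1 by push_cast; rfl]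
      exact contDiff_succ_iff_deriv.mpr ⟨hdiff, by simp, hderiv ▸ this⟩
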